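/- For ν > 2 and q > ν − 2, the chi-square upper tail satisfies P(χ²_ν > q) ≤ (1/√π) · (q/(q − ν + 2)) · exp( −(1/2)( q − ν − (ν−2) log(q/ν) + log ν ) ). -/

import Mathlib

open MeasureTheory ProbabilityTheory Real Set

/-- Standard normal probability density function φ. -/
noncomputable def stdNormalPDF (z : ℝ) : ℝ :=
  (Real.sqrt (2 * Real.pi))⁻¹ * Real.exp (- z ^ 2 / 2)

/-- Standard normal cumulative distribution function Φ. -/
noncomputable def stdNormalCDF (x : ℝ) : ℝ := ∫ z in Set.Iic x, stdNormalPDF z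

/-- Density of the chi-square distribution with ν degrees of freedom. -/
noncomputable def chiSqPDF (ν q : ℝ) : ℝ :=
  if 0 < q then ((1 : ℝ) / 2) ^ (ν / 2) / Real.Gamma (ν / 2) * q ^ (ν / 2 - 1) * Real.exp (- q / 2)
  else 0

/-- CDF of the chi-square distribution with ν degrees of freedom. -/
noncomputable def chiSqCDF (ν q : ℝ) : ℝ := ∫ t in Set.Iic q, chiSqPDF ν t

/-- Upper regularized incomplete gamma function Γ_u(a, x). -/
noncomputable def upperRegGamma (a x : ℝ) : ℝ :=
  (∫ t in Set.Ioi x, Real.exp (-t) * t ^ (a - 1)) / Real.Gamma a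

/-- Lower regularized incomplete gamma function Γ_l(a, x). -/
noncomputable def lowerRegGamma (a x : ℝ) : ℝ := 1 - upperRegGamma a x


open Filter

noncomputable def stirF (x : ℝ) : ℝ :=
  Real.log (Real.Gamma x) - ((x - 1/2) * Real.log x - x + Real.log (Real.sqrt (2*Real.pi)))

lemma log_sqrt_two_pi : Real.log (Real.sqrt (2*Real.pi)) = (Real.log 2 + Real.log Real.pi)/2 := by
  rw [Real.log_sqrt (by positivity), Real.log_mul two_ne_zero Real.pi_ne_zero]

lemma stirF_doubling {x : ℝ} (hx : 0 < x) : stirF (2*x) ≤ 2 * stirF x := by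
  have hg1 : 0 < Real.Gamma x := Real.Gamma_pos_of_pos hx
  have hg2 : 0 < Real.Gamma (x+1/2) := Real.Gamma_pos_of_pos (by linarith)
  have hg3 : 0 < Real.Gamma (2*x) := Real.Gamma_pos_of_pos (by linarith)
  -- convexity
  have h := Real.convexOn_log_Gamma.2 (mem_Ioi.mpr hx)
    (show (x+1) ∈ Ioi 0 from mem_Ioi.mpr (by linarith))
    (by norm_num : (0:ℝ) ≤ 1/2) (by norm_num : (0:ℝ) ≤ 1/2) (by norm_num)
  simp only [Function.comp, smul_eq_mul] at h
  rw [show (1/2 : ℝ) * x + (1/2) * (x+1) = x + 1/2 by ring] at h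
  rw [Real.Gamma_add_one hx.ne', Real.log_mul hx.ne' hg1.ne'] at h
  -- duplication
  have hd := Real.Gamma_mul_Gamma_add_half x
  have hd' : Real.log (Real.Gamma x) + Real.log (Real.Gamma (x+1/2))
      = Real.log (Real.Gamma (2*x)) + (1-2*x) * Real.log 2 + Real.log Real.pi / 2 := by
    rw [← Real.log_mul hg1.ne' hg2.ne', hd,
      Real.log_mul (by positivity) (Real.sqrt_ne_zero'.mpr Real.pi_pos),
      Real.log_mul hg3.ne' (by positivity), Real.log_rpow two_pos,
      Real.log_sqrt Real.pi_pos.le]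
  have hlog2x : Real.log (2*x) = Real.log 2 + Real.log x := Real.log_mul two_ne_zero hx.ne'
  simp only [stirF, hlog2x, log_sqrt_two_pi]
  nlinarith [h, hd']

lemma sqrtpi_le_stirlingSeq (m : ℕ) : Real.sqrt Real.pi ≤ Stirling.stirlingSeq (m+1) :=
  Stirling.stirlingSeq'_antitone.le_of_tendsto
    (Stirling.tendsto_stirlingSeq_sqrt_pi.comp (Filter.tendsto_add_atTop_nat 1)) m

lemma factorial_ge (n : ℕ) (hn : 1 ≤ n) : ((n:ℝ)/Real.exp 1)^n ≤ (n.factorial : ℝ) := by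
  obtain ⟨m, rfl⟩ := Nat.exists_eq_add_of_le' hn
  have h := sqrtpi_le_stirlingSeq m
  rw [Stirling.stirlingSeq] at h
  have hn' : (0:ℝ) < (m+1 : ℕ) := by positivity
  have hpos : (0:ℝ) < Real.sqrt (2 * (m+1:ℕ)) * (((m+1:ℕ):ℝ) / Real.exp 1) ^ (m+1) := by
    positivity
  rw [le_div_iff₀ hpos] at h
  calc (((m+1:ℕ):ℝ)/Real.exp 1)^(m+1)
      = 1 * (((m+1:ℕ):ℝ)/Real.exp 1)^(m+1) := (one_mul _).symm
    _ ≤ (Real.sqrt Real.pi * Real.sqrt (2 * (m+1:ℕ))) * (((m+1:ℕ):ℝ)/Real.exp 1)^(m+1) := by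
        have h1 : (1:ℝ) ≤ Real.sqrt Real.pi * Real.sqrt (2 * (m+1:ℕ)) := by
          rw [← Real.sqrt_mul Real.pi_pos.le]
          rw [show (1:ℝ) = Real.sqrt 1 from (Real.sqrt_one).symm]
          apply Real.sqrt_le_sqrt
          have hm1 : (1:ℝ) ≤ ((m+1:ℕ):ℝ) := by exact_mod_cast hn
          nlinarith [Real.pi_gt_three, hm1,
            mul_le_mul Real.pi_gt_three.le (by linarith : (2:ℝ) ≤ 2*((m+1:ℕ):ℝ))
              (by norm_num) Real.pi_pos.le]
        have h2 : (0:ℝ) ≤ (((m+1:ℕ):ℝ)/Real.exp 1)^(m+1) := by positivity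
        nlinarith
    _ ≤ ((m+1).factorial : ℝ) := by rw [← mul_assoc] at h; exact h

lemma gamma_ge_factorial_div {x : ℝ} (hx : 1 ≤ x) :
    Real.log (Nat.factorial ⌊x⌋₊ : ℝ) ≤ Real.log (Real.Gamma x) + Real.log x := by
  set n := ⌊x⌋₊ with hn
  have hx0 : (0:ℝ) < x := by linarith
  have hnx : (n:ℝ) ≤ x := Nat.floor_le hx0.le
  have hxn : x < (n:ℝ) + 1 := Nat.lt_floor_add_one x
  have hlx : 0 ≤ Real.log x := Real.log_nonneg hx
  have h := Real.convexOn_log_Gamma.2 (mem_Ioi.mpr hx0)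
    (show (x+1) ∈ Ioi 0 from mem_Ioi.mpr (by linarith))
    (show (0:ℝ) ≤ x - n by linarith) (show (0:ℝ) ≤ (n:ℝ)+1-x by linarith) (by ring)
  simp only [Function.comp, smul_eq_mul] at h
  rw [show (x - n) * x + ((n:ℝ)+1-x) * (x+1) = (n:ℝ)+1 by ring] at h
  rw [Real.Gamma_add_one hx0.ne', Real.log_mul hx0.ne'
    (Real.Gamma_pos_of_pos hx0).ne'] at h
  rw [Real.Gamma_nat_eq_factorial] at h
  nlinarith [h, hlx]

lemma stirF_crude {x : ℝ} (hx : 2 ≤ x) : -4 * Real.sqrt x - 4 ≤ stirF x := by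
  set n := ⌊x⌋₊ with hn
  have hx0 : (0:ℝ) < x := by linarith
  have hn2 : 2 ≤ n := Nat.le_floor (by exact_mod_cast hx)
  have hn1 : 1 ≤ n := by omega
  have hnx : (n:ℝ) ≤ x := Nat.floor_le hx0.le
  have hxn : x < (n:ℝ) + 1 := Nat.lt_floor_add_one x
  have hnn : (1:ℝ) ≤ (n:ℝ) := by exact_mod_cast hn1
  -- log n! ≥ n log n - n
  have hf : (n:ℝ) * Real.log n - n ≤ Real.log (n.factorial : ℝ) := by
    have := Real.log_le_log (by positivity) (factorial_ge n hn1)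
    rwa [Real.log_pow, Real.log_div (by positivity) (Real.exp_pos 1).ne',
      Real.log_exp, mul_sub, mul_one] at this
  -- n log n ≥ (x-1) log (x-1)
  have hmono : (x-1) * Real.log (x-1) ≤ (n:ℝ) * Real.log n := by
    have h1 : (1:ℝ) ≤ x - 1 := by linarith
    have h2 : x - 1 ≤ (n:ℝ) := by linarith
    have := Real.log_le_log (by linarith) h2
    apply mul_le_mul h2 this (Real.log_nonneg h1) (by linarith)
  -- (x-1) log(x-1) ≥ (x-1) log x - 1
  have hshift : (x-1) * Real.log x - 1 ≤ (x-1) * Real.log (x-1) := by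
    have h1 : (0:ℝ) < x - 1 := by linarith
    have h2 : Real.log (x/(x-1)) ≤ x/(x-1) - 1 :=
      Real.log_le_sub_one_of_pos (by positivity)
    rw [Real.log_div hx0.ne' h1.ne'] at h2
    have h3 : x/(x-1) - 1 = 1/(x-1) := by field_simp; ring
    rw [h3] at h2
    have h4 : (x-1) * (Real.log x - Real.log (x-1)) ≤ (x-1) * (1/(x-1)) :=
      mul_le_mul_of_nonneg_left h2 h1.le
    have h5 : (x-1) * (1/(x-1)) = 1 := by field_simp
    nlinarith
  have hgam := gamma_ge_factorial_div (by linarith : 1 ≤ x)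
  -- L ≤ 3
  have hL : Real.log (Real.sqrt (2*Real.pi)) ≤ 3 := by
    have : Real.log (Real.sqrt (2*Real.pi)) ≤ Real.sqrt (2*Real.pi) - 1 :=
      Real.log_le_sub_one_of_pos (by positivity)
    have h2 : Real.sqrt (2*Real.pi) ≤ 4 := by
      rw [show (4:ℝ) = Real.sqrt 16 by
        rw [show (16:ℝ) = 4^2 by norm_num, Real.sqrt_sq]; norm_num]
      apply Real.sqrt_le_sqrt; nlinarith [Real.pi_lt_d2]
    linarith
  -- log x ≤ 2 sqrt x
  have hls : Real.log x ≤ 2 * Real.sqrt x := by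
    have h1 : Real.log (Real.sqrt x) ≤ Real.sqrt x - 1 :=
      Real.log_le_sub_one_of_pos (Real.sqrt_pos.mpr hx0)
    rw [Real.log_sqrt hx0.le] at h1
    linarith
  have hlx : 0 ≤ Real.log x := Real.log_nonneg (by linarith)
  have hsx : 0 ≤ Real.sqrt x := Real.sqrt_nonneg x
  simp only [stirF]
  nlinarith [hf, hmono, hshift, hgam, hL, hls, hlx, hsx, hnx, hxn]

lemma stirF_nonneg {a : ℝ} (ha : 0 < a) : 0 ≤ stirF a := by
  have hiter : ∀ n : ℕ, stirF (2^n * a) ≤ 2^n * stirF a := by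
    intro n
    induction n with
    | zero => simp
    | succ n ih =>
      have h2 : (0:ℝ) < 2^n * a := by positivity
      calc stirF (2^(n+1) * a) = stirF (2 * (2^n * a)) := by ring_nf
        _ ≤ 2 * stirF (2^n * a) := stirF_doubling h2
        _ ≤ 2 * (2^n * stirF a) := by linarith
        _ = 2^(n+1) * stirF a := by ring
  -- for large n, 2^n * a ≥ 2
  have htend : Tendsto (fun n : ℕ => (-4 * Real.sqrt a * ((Real.sqrt 2 / 2)^n) - 4 * (1/2:ℝ)^n)) atTop (nhds 0) := by
    have h1 : Tendsto (fun n : ℕ => ((Real.sqrt 2 / 2 : ℝ))^n) atTop (nhds 0) := by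
      apply tendsto_pow_atTop_nhds_zero_of_lt_one (by positivity)
      have h4 : Real.sqrt 2 < 2 := by
        nlinarith [Real.sq_sqrt (by norm_num : (0:ℝ) ≤ 2), Real.sqrt_nonneg 2]
      linarith
    have h2 : Tendsto (fun n : ℕ => ((1/2 : ℝ))^n) atTop (nhds 0) :=
      tendsto_pow_atTop_nhds_zero_of_lt_one (by norm_num) (by norm_num)
    have := ((h1.const_mul (-4 * Real.sqrt a)).sub (h2.const_mul 4))
    simpa using this
  apply le_of_tendsto_of_tendsto htend tendsto_const_nhds
  rw [EventuallyLE, eventually_atTop]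
  have hN : ∃ N : ℕ, 2 ≤ 2^N * a := by
    obtain ⟨N, hN⟩ := pow_unbounded_of_one_lt (2/a) (by norm_num : (1:ℝ) < 2)
    exact ⟨N, by rw [div_lt_iff₀ ha] at hN; linarith⟩
  obtain ⟨N, hN⟩ := hN
  refine ⟨N, fun n hn => ?_⟩
  have hx2 : 2 ≤ 2^n * a := by
    have : (2:ℝ)^N ≤ 2^n := pow_le_pow_right₀ (by norm_num) hn
    nlinarith [ha]
  have hcrude := stirF_crude hx2
  have hiter' := hiter n
  -- sqrt(2^n * a) = (sqrt 2)^n * sqrt a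
  have hsq : Real.sqrt (2^n * a) = (Real.sqrt 2)^n * Real.sqrt a := by
    rw [Real.sqrt_mul (by positivity)]
    congr 1
    rw [Real.sqrt_eq_rpow, Real.sqrt_eq_rpow, ← Real.rpow_natCast ((2:ℝ) ^ (1/(2:ℝ))) n,
      ← Real.rpow_mul (by norm_num), ← Real.rpow_natCast (2:ℝ) n, ← Real.rpow_mul (by norm_num)]
    ring_nf
  have key : -4 * ((Real.sqrt 2)^n * Real.sqrt a) - 4 ≤ 2^n * stirF a := by
    rw [← hsq]; linarith
  have h2n : (0:ℝ) < 2^n := by positivity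
  calc -4 * Real.sqrt a * (Real.sqrt 2 / 2)^n - 4 * (1/2)^n
        = (-4 * ((Real.sqrt 2)^n * Real.sqrt a) - 4) / 2^n := by
          have e1 : (Real.sqrt 2 / 2)^n * 2^n = (Real.sqrt 2)^n := by
            rw [← mul_pow, div_mul_cancel₀ _ two_ne_zero]
          have e2 : (1/2:ℝ)^n * 2^n = 1 := by rw [← mul_pow]; norm_num
          rw [eq_div_iff h2n.ne']
          linear_combination (-4 * Real.sqrt a) * e1 + (-4) * e2
      _ ≤ (2^n * stirF a) / 2^n := by
          exact div_le_div_of_nonneg_right key h2n.le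
      _ = stirF a := by field_simp

lemma integrable_exp_shift {s q : ℝ} (hs : 0 < s) :
    IntegrableOn (fun x => Real.exp (-(s*(x-q)))) (Ioi q) := by
  have h := (exp_neg_integrableOn_Ioi q hs).const_mul (Real.exp (s*q))
  apply h.congr
  apply (ae_restrict_iff' measurableSet_Ioi).mpr (ae_of_all _ ?_)
  intro x _
  simp only [← Real.exp_add]; ring_nf

lemma tendsto_exp_shift {s q : ℝ} (hs : 0 < s) :
    Tendsto (fun x => Real.exp (-(s*(x-q)))) atTop (nhds 0) := by
  have h0 : Tendsto (fun x : ℝ => s*x) atTop atTop :=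
    Tendsto.const_mul_atTop hs tendsto_id
  have h1 : Tendsto (fun x : ℝ => -(s*x)) atTop atBot :=
    tendsto_neg_atTop_atBot.comp h0
  have h2 : Tendsto (fun x : ℝ => -(s*x) + s*q) atTop atBot :=
    tendsto_atBot_add_const_right _ (s*q) h1
  have h3 : Tendsto (fun x : ℝ => -(s*(x-q))) atTop atBot := by
    convert h2 using 2 with x; ring
  exact Real.tendsto_exp_atBot.comp h3

lemma integral_exp_shift {s q : ℝ} (hs : 0 < s) :
    ∫ x in Ioi q, Real.exp (-(s*(x-q))) = 1/s := by
  have hderiv : ∀ x ∈ Ici q, HasDerivAt (fun x => -(1/s) * Real.exp (-(s*(x-q))))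
      (Real.exp (-(s*(x-q)))) x := by
    intro x _
    have h1 : HasDerivAt (fun x : ℝ => -(s*(x-q))) (-s) x := by
      simpa using ((hasDerivAt_id x).sub_const q).const_mul (-s)
    have := (h1.exp).const_mul (-(1/s))
    convert this using 1
    · rfl
    · rfl
    · rw [mul_neg, neg_mul_neg, one_div, mul_left_comm, inv_mul_cancel₀ hs.ne', mul_one]
  have htend : Tendsto (fun x => -(1/s) * Real.exp (-(s*(x-q)))) atTop (nhds 0) := by
    simpa using (tendsto_exp_shift (q := q) hs).const_mul (-(1/s))
  have := integral_Ioi_of_hasDerivAt_of_tendsto' hderiv (integrable_exp_shift hs) htend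
  rw [this]; simp

/-- Inglot–Ledwina upper bound for the chi-square upper tail:
P(χ²_ν > q) ≤ (1/√π)·(q/(q−ν+2))·exp(−(1/2)(q − ν − (ν−2)log(q/ν) + log ν)). -/
theorem chiSq_tail_upper_bound (ν q : ℝ) (hν : 2 < ν) (hq : ν - 2 < q) :
    (ProbabilityTheory.gammaMeasure (ν / 2) (1 / 2) (Set.Ioi q)).toReal
      ≤ (1 / Real.sqrt Real.pi) * (q / (q - ν + 2))
        * Real.exp (-(1 / 2) * (q - ν - (ν - 2) * Real.log (q / ν) + Real.log ν)) := by
  have hq0 : 0 < q := by linarith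
  have hν0 : 0 < ν := by linarith
  set a : ℝ := ν/2 with ha_def
  have ha1 : 1 < a := by rw [ha_def]; linarith
  have ha0 : 0 < a := by linarith
  have hGpos : 0 < Real.Gamma a := Real.Gamma_pos_of_pos ha0
  set s : ℝ := (q - ν + 2)/(2*q) with hs_def
  have hqν : 0 < q - ν + 2 := by linarith
  have hs : 0 < s := div_pos hqν (by linarith)
  have hs2 : s = 1/2 - (a-1)/q := by rw [hs_def, ha_def]; field_simp; ring
  set K : ℝ := (1/2:ℝ)^a / Real.Gamma a * q^(a-1) * Real.exp (-(q/2)) with hK_def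
  have hKpos : 0 < K := by
    rw [hK_def]
    have := Real.rpow_pos_of_pos (by norm_num : (0:ℝ) < 1/2) a
    have := Real.rpow_pos_of_pos hq0 (a-1)
    positivity
  -- pointwise bound
  have h_pt : ∀ x ∈ Ioi q, gammaPDFReal a (1/2) x ≤ K * Real.exp (-(s*(x-q))) := by
    intro x hx
    have hxq : q < x := hx
    have hx0 : 0 < x := lt_trans hq0 hxq
    rw [gammaPDFReal, if_pos hx0.le]
    have key : Real.log x * (a-1) + (-(1/2*x)) ≤
        Real.log q * (a-1) + (-(q/2)) + (-(s*(x-q))) := by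
      have hlog : Real.log x - Real.log q ≤ (x-q)/q := by
        have h1 : Real.log (x/q) ≤ x/q - 1 := Real.log_le_sub_one_of_pos (by positivity)
        rw [Real.log_div hx0.ne' hq0.ne'] at h1
        have : x/q - 1 = (x-q)/q := by field_simp
        linarith [this ▸ h1]
      have h1 : (a-1) * (Real.log x - Real.log q) ≤ (a-1) * ((x-q)/q) :=
        mul_le_mul_of_nonneg_left hlog (by linarith)
      have h2 : s * (x-q) = (x-q)/2 - (a-1) * ((x-q)/q) := by
        rw [hs2]; field_simp
      nlinarith [h1, h2]
    calc (1/2:ℝ)^a / Real.Gamma a * x^(a-1) * Real.exp (-(1/2*x))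
        = (1/2:ℝ)^a / Real.Gamma a * (x^(a-1) * Real.exp (-(1/2*x))) := by ring
      _ ≤ (1/2:ℝ)^a / Real.Gamma a *
            (q^(a-1) * Real.exp (-(q/2)) * Real.exp (-(s*(x-q)))) := by
          apply mul_le_mul_of_nonneg_left _ (by positivity)
          rw [Real.rpow_def_of_pos hx0, Real.rpow_def_of_pos hq0,
            ← Real.exp_add, ← Real.exp_add, ← Real.exp_add]
          exact Real.exp_le_exp.mpr key
      _ = K * Real.exp (-(s*(x-q))) := by rw [hK_def]; ring
  -- measure bound
  have hbound : gammaMeasure a (1/2) (Ioi q) ≤ ENNReal.ofReal (K * (1/s)) := by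
    rw [gammaMeasure, withDensity_apply _ measurableSet_Ioi]
    calc ∫⁻ x in Ioi q, gammaPDF a (1/2) x
        ≤ ∫⁻ x in Ioi q, ENNReal.ofReal (K * Real.exp (-(s*(x-q)))) := by
          apply setLIntegral_mono' measurableSet_Ioi
          intro x hx
          exact ENNReal.ofReal_le_ofReal (h_pt x hx)
      _ = ENNReal.ofReal (∫ x in Ioi q, K * Real.exp (-(s*(x-q)))) := by
          rw [ofReal_integral_eq_lintegral_ofReal]
          · exact (integrable_exp_shift hs).const_mul K
          · exact ae_of_all _ fun x => mul_nonneg hKpos.le (Real.exp_pos _).le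
      _ = ENNReal.ofReal (K * (1/s)) := by
          rw [integral_const_mul, integral_exp_shift hs]
  have htoReal : (gammaMeasure a (1/2) (Ioi q)).toReal ≤ K * (1/s) :=
    ENNReal.toReal_le_of_le_ofReal (by positivity) hbound
  refine htoReal.trans ?_
  -- final algebra
  have hs1 : (1:ℝ)/s = 2*q/(q-ν+2) := by rw [hs_def]; field_simp
  -- core inequality (after removing common positive factors)
  have hcore : (1/2:ℝ)^a / Real.Gamma a * q^(a-1) * 2
      ≤ (1/Real.sqrt Real.pi) * (q/ν)^(a-1) * (ν:ℝ)^(-(1/2):ℝ) * Real.exp a := by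
    have hstir : (a - 1/2) * Real.log a - a + Real.log (Real.sqrt (2*Real.pi))
        ≤ Real.log (Real.Gamma a) := by
      have := stirF_nonneg ha0
      rw [stirF] at this; linarith
    have hLpos : (0:ℝ) < (1/2:ℝ)^a / Real.Gamma a * q^(a-1) * 2 := by
      have := Real.rpow_pos_of_pos (by norm_num : (0:ℝ) < 1/2) a
      have := Real.rpow_pos_of_pos hq0 (a-1)
      positivity
    have hRpos : (0:ℝ) < (1/Real.sqrt Real.pi) * (q/ν)^(a-1) * (ν:ℝ)^(-(1/2):ℝ) * Real.exp a := by
      have h1 := Real.rpow_pos_of_pos (show (0:ℝ) < q/ν by positivity) (a-1)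
      have h2 := Real.rpow_pos_of_pos hν0 (-(1/2):ℝ)
      have h3 := Real.sqrt_pos.mpr Real.pi_pos
      positivity
    rw [← Real.log_le_log_iff hLpos hRpos]
    have hsp : 0 < Real.sqrt Real.pi := Real.sqrt_pos.mpr Real.pi_pos
    rw [Real.log_mul (by positivity) two_ne_zero,
      Real.log_mul (by positivity) (Real.rpow_pos_of_pos hq0 (a-1)).ne',
      Real.log_div (Real.rpow_pos_of_pos (by norm_num : (0:ℝ) < 1/2) a).ne' hGpos.ne',
      Real.log_mul (by positivity) (Real.exp_pos a).ne',
      Real.log_mul (by positivity) (Real.rpow_pos_of_pos hν0 (-(1/2):ℝ)).ne',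
      Real.log_mul (by positivity) (Real.rpow_pos_of_pos (by positivity : (0:ℝ) < q/ν) (a-1)).ne',
      Real.log_rpow (by norm_num : (0:ℝ) < 1/2), Real.log_rpow hq0,
      Real.log_rpow hν0, Real.log_rpow (by positivity : (0:ℝ) < q/ν),
      Real.log_exp, Real.log_div one_ne_zero hsp.ne',
      Real.log_div hq0.ne' hν0.ne']
    have e1 : Real.log (1/2 : ℝ) = -Real.log 2 := by
      rw [one_div, Real.log_inv]
    have e2 : Real.log (Real.sqrt (2*Real.pi)) = (Real.log 2 + Real.log Real.pi)/2 := by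
      rw [Real.log_sqrt (by positivity), Real.log_mul two_ne_zero Real.pi_ne_zero]
    have e3 : Real.log (Real.sqrt Real.pi) = Real.log Real.pi / 2 :=
      Real.log_sqrt Real.pi_pos.le
    have e4 : Real.log a = Real.log ν - Real.log 2 := by
      rw [ha_def, ← Real.log_div hν0.ne' two_ne_zero]
    rw [e1, Real.log_one]
    rw [e2, e4] at hstir
    linarith [hstir, e3]
  -- exp E expansion
  have hE : Real.exp (-(1 / 2) * (q - ν - (ν - 2) * Real.log (q / ν) + Real.log ν))
      = Real.exp (-(q/2)) * ((q/ν)^(a-1) * ((ν:ℝ)^(-(1/2):ℝ) * Real.exp a)) := by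
    rw [Real.rpow_def_of_pos (by positivity : (0:ℝ) < q/ν),
      Real.rpow_def_of_pos hν0, ← Real.exp_add, ← Real.exp_add, ← Real.exp_add]
    congr 1
    rw [ha_def]; ring
  rw [hE, hs1]
  calc K * (2*q/(q-ν+2))
      = ((1/2:ℝ)^a / Real.Gamma a * q^(a-1) * 2) * (Real.exp (-(q/2)) * (q/(q-ν+2))) := by
        rw [hK_def]; field_simp
    _ ≤ ((1/Real.sqrt Real.pi) * (q/ν)^(a-1) * (ν:ℝ)^(-(1/2):ℝ) * Real.exp a)
          * (Real.exp (-(q/2)) * (q/(q-ν+2))) := by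
        apply mul_le_mul_of_nonneg_right hcore (by positivity)
    _ = 1 / Real.sqrt Real.pi * (q / (q - ν + 2)) *
          (Real.exp (-(q/2)) * ((q/ν)^(a-1) * ((ν:ℝ)^(-(1/2):ℝ) * Real.exp a))) := by
        ring
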